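/- For every ξ ∈ ℝ, every k ∈ ℤ and every real θ > 0, one has ∫₀^{π/2} ρ_{ξ,k}(θ·sin²t) dt = e^{(ξ+ik)·θ}. -/

import Mathlib

/-- `ρ_{ξ,k}(x) = (2/π)(2 w e^{wx} √x ∫₀^{√x} e^{-w u²} du + 1)` with `w = ξ + i k`. -/
noncomputable def rho (ξ : ℝ) (k : ℤ) (x : ℝ) : ℂ :=
  (2 / (Real.pi : ℂ)) *
    (2 * ((ξ : ℂ) + (k : ℂ) * Complex.I) *
        Complex.exp (((ξ : ℂ) + (k : ℂ) * Complex.I) * (x : ℂ)) * (Real.sqrt x : ℂ) *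
        (∫ u in (0:ℝ)..Real.sqrt x,
          Complex.exp (-(((ξ : ℂ) + (k : ℂ) * Complex.I)) * (u : ℂ) ^ 2)) + 1)

open MeasureTheory Real intervalIntegral

noncomputable def Ew (w : ℂ) (y : ℝ) : ℂ := ∫ u in (0:ℝ)..y, Complex.exp (-w * (u:ℂ)^2)

lemma continuous_ewi (w : ℂ) : Continuous (fun u : ℝ => Complex.exp (-w * (u:ℂ)^2)) := by
  fun_prop

lemma hasDerivAt_Ew (w : ℂ) (y : ℝ) :
    HasDerivAt (Ew w) (Complex.exp (-w * (y:ℂ)^2)) y :=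
  intervalIntegral.integral_hasDerivAt_right ((continuous_ewi w).intervalIntegrable _ _)
    ((continuous_ewi w).stronglyMeasurableAtFilter _ _) (continuous_ewi w).continuousAt

lemma continuous_Ew (w : ℂ) : Continuous (Ew w) :=
  continuous_iff_continuousAt.2 fun y => (hasDerivAt_Ew w y).continuousAt

@[simp] lemma Ew_zero (w : ℂ) : Ew w 0 = 0 := intervalIntegral.integral_same

noncomputable def gg (w : ℂ) (r t : ℝ) : ℂ :=
  ((r * Real.cos t : ℝ) : ℂ) * Complex.exp (-w * (r:ℂ)^2 * (Real.sin t : ℂ)^2) *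
    Ew w (r * Real.cos t)

noncomputable def PP (w : ℂ) (r t : ℝ) : ℂ :=
  ((Real.sin t : ℝ) : ℂ) * Complex.exp (-w * (r:ℂ)^2 * (Real.sin t : ℂ)^2) *
    Ew w (r * Real.cos t)

noncomputable def DD (w : ℂ) (r t : ℝ) : ℂ :=
  (Real.cos t : ℂ) * (1 - 2*w*(r:ℂ)^2*(Real.sin t : ℂ)^2) *
    Complex.exp (-w * (r:ℂ)^2 * (Real.sin t : ℂ)^2) * Ew w (r * Real.cos t)

lemma sin_sq_add_cos_sq_complex (t : ℝ) :
    ((Real.sin t : ℂ))^2 + ((Real.cos t : ℂ))^2 = 1 := by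
  exact_mod_cast congrArg Complex.ofReal (Real.sin_sq_add_cos_sq t)

lemma exp_mul_exp (w : ℂ) (r t : ℝ) :
    Complex.exp (-w * (r:ℂ)^2 * (Real.sin t : ℂ)^2) *
      Complex.exp (-w * ((r:ℂ) * (Real.cos t : ℂ))^2) = Complex.exp (-w * (r:ℂ)^2) := by
  rw [← Complex.exp_add]
  congr 1
  linear_combination (-w * (r:ℂ)^2) * sin_sq_add_cos_sq_complex t

lemma hasDerivAt_gg (w : ℂ) (r t : ℝ) :
    HasDerivAt (fun r => gg w r t)
      (DD w r t + (r:ℂ) * (Real.cos t : ℂ)^2 * Complex.exp (-w * (r:ℂ)^2)) r := by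
  have hr : HasDerivAt (fun r : ℝ => ((r:ℝ):ℂ)) 1 r := by
    simpa using (hasDerivAt_id r).ofReal_comp
  have h1 : HasDerivAt (fun r : ℝ => ((r * Real.cos t : ℝ) : ℂ)) ((Real.cos t : ℂ)) r := by
    have := ((hasDerivAt_id r).mul_const (Real.cos t)).ofReal_comp
    simpa using this
  have h2 : HasDerivAt (fun r : ℝ => Complex.exp (-w * (r:ℂ)^2 * (Real.sin t : ℂ)^2))
      (Complex.exp (-w * (r:ℂ)^2 * (Real.sin t : ℂ)^2) * (-w * (2*(r:ℂ)) * (Real.sin t:ℂ)^2)) r := by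
    have hin : HasDerivAt (fun r : ℝ => -w * (r:ℂ)^2 * (Real.sin t : ℂ)^2)
        (-w * (2*(r:ℂ)) * (Real.sin t:ℂ)^2) r := by
      have h := ((hr.mul hr).const_mul (-w)).mul_const ((Real.sin t:ℂ)^2)
      have hfun : (fun r : ℝ => -w * (r:ℂ)^2 * (Real.sin t : ℂ)^2)
          = fun y : ℝ => -w * ((y:ℂ) * (y:ℂ)) * (Real.sin t : ℂ)^2 := by
        funext y; ring
      rw [hfun]
      exact h.congr_deriv (by ring)
    exact hin.cexp
  have h3 : HasDerivAt (fun r : ℝ => Ew w (r * Real.cos t))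
      ((Real.cos t : ℝ) • Complex.exp (-w * ((r * Real.cos t:ℝ):ℂ)^2)) r := by
    have hin : HasDerivAt (fun r : ℝ => r * Real.cos t) (Real.cos t) r := by
      simpa using (hasDerivAt_id r).mul_const (Real.cos t)
    exact (hasDerivAt_Ew w (r * Real.cos t)).scomp r hin
  have H := (h1.mul h2).mul h3
  refine H.congr_deriv ?_
  rw [DD, ← exp_mul_exp w r t]
  simp only [Complex.real_smul, Complex.ofReal_mul, Pi.mul_apply]
  ring

lemma hasDerivAt_PP (w : ℂ) (r t : ℝ) :
    HasDerivAt (fun t => PP w r t)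
      (DD w r t - (r:ℂ) * (Real.sin t : ℂ)^2 * Complex.exp (-w * (r:ℂ)^2)) t := by
  have hsin : HasDerivAt (fun t : ℝ => ((Real.sin t : ℝ):ℂ)) ((Real.cos t : ℂ)) t :=
    (Real.hasDerivAt_sin t).ofReal_comp
  have h2 : HasDerivAt (fun t : ℝ => Complex.exp (-w * (r:ℂ)^2 * (Real.sin t : ℂ)^2))
      (Complex.exp (-w * (r:ℂ)^2 * (Real.sin t : ℂ)^2)
        * (-w * (r:ℂ)^2 * (2 * (Real.sin t:ℂ) * (Real.cos t:ℂ)))) t := by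
    have hin : HasDerivAt (fun t : ℝ => -w * (r:ℂ)^2 * (Real.sin t : ℂ)^2)
        (-w * (r:ℂ)^2 * (2 * (Real.sin t:ℂ) * (Real.cos t:ℂ))) t := by
      have h := (hsin.mul hsin).const_mul (-w * (r:ℂ)^2)
      have hfun : (fun t : ℝ => -w * (r:ℂ)^2 * (Real.sin t : ℂ)^2)
          = fun t : ℝ => -w * (r:ℂ)^2 * ((Real.sin t:ℂ) * (Real.sin t:ℂ)) := by
        funext y; ring
      rw [hfun]
      exact h.congr_deriv (by ring)
    exact hin.cexp
  have h3 : HasDerivAt (fun t : ℝ => Ew w (r * Real.cos t))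
      ((r * -Real.sin t : ℝ) • Complex.exp (-w * ((r * Real.cos t:ℝ):ℂ)^2)) t := by
    have hin : HasDerivAt (fun t : ℝ => r * Real.cos t) (r * -Real.sin t) t :=
      (Real.hasDerivAt_cos t).const_mul r
    exact (hasDerivAt_Ew w (r * Real.cos t)).scomp t hin
  have H := (hsin.mul h2).mul h3
  refine H.congr_deriv ?_
  rw [DD, ← exp_mul_exp w r t]
  simp only [Complex.real_smul, Complex.ofReal_mul, Complex.ofReal_neg, Pi.mul_apply]
  ring

/-- the integrand for the `r`-FTC -/
noncomputable def DG (w : ℂ) (r t : ℝ) : ℂ :=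
  DD w r t + (r:ℂ) * (Real.cos t : ℂ)^2 * Complex.exp (-w * (r:ℂ)^2)

lemma continuous_DD (w : ℂ) : Continuous (fun p : ℝ × ℝ => DD w p.1 p.2) := by
  unfold DD
  have hE : Continuous (fun p : ℝ × ℝ => Ew w (p.1 * Real.cos p.2)) :=
    (continuous_Ew w).comp (by fun_prop)
  have h1 : Continuous (fun p : ℝ × ℝ => (Real.cos p.2 : ℂ) *
      (1 - 2*w*(p.1:ℂ)^2*(Real.sin p.2 : ℂ)^2) *
      Complex.exp (-w * (p.1:ℂ)^2 * (Real.sin p.2 : ℂ)^2)) := by fun_prop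
  exact h1.mul hE

lemma continuous_DG (w : ℂ) : Continuous (fun p : ℝ × ℝ => DG w p.1 p.2) := by
  unfold DG
  exact (continuous_DD w).add (by fun_prop)

lemma DG_eq (w : ℂ) (r t : ℝ) :
    DG w r t = (DD w r t - (r:ℂ) * (Real.sin t : ℂ)^2 * Complex.exp (-w * (r:ℂ)^2))
      + (r:ℂ) * Complex.exp (-w * (r:ℂ)^2) := by
  unfold DG
  linear_combination ((r:ℂ) * Complex.exp (-w * (r:ℂ)^2)) * sin_sq_add_cos_sq_complex t

set_option maxHeartbeats 800000 in
lemma keyL (w : ℂ) (R : ℝ) (hR : 0 ≤ R) :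
    w * (∫ t in (0:ℝ)..(Real.pi/2), gg w R t)
      = (Real.pi : ℂ)/4 * (1 - Complex.exp (-w * (R:ℂ)^2)) := by
  have hpi : (0:ℝ) ≤ Real.pi/2 := by positivity
  have hcontr : ∀ t : ℝ, Continuous (fun r => DG w r t) := by
    intro t
    simpa [Function.comp_def] using
      (continuous_DG w).comp (continuous_id.prodMk (continuous_const (y := t)))
  have hcontt : ∀ r : ℝ, Continuous (fun t => DG w r t) := by
    intro r
    simpa [Function.comp_def] using
      (continuous_DG w).comp ((continuous_const (y := r)).prodMk continuous_id)
  -- step 1 : gg w R t = ∫ r in 0..R, DG w r t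
  have step1 : ∀ t, gg w R t = ∫ r in (0:ℝ)..R, DG w r t := by
    intro t
    have := intervalIntegral.integral_eq_sub_of_hasDerivAt
      (f := fun r => gg w r t) (f' := fun r => DG w r t)
      (fun r _ => hasDerivAt_gg w r t) ((hcontr t).intervalIntegrable 0 R)
    have h0 : gg w 0 t = 0 := by unfold gg; simp
    simpa [h0] using this.symm
  -- step 4 : inner t-integral
  have step4 : ∀ r : ℝ, (∫ t in (0:ℝ)..(Real.pi/2), DG w r t)
      = ((Real.pi/2 : ℝ) : ℂ) * ((r:ℂ) * Complex.exp (-w * (r:ℂ)^2)) := by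
    intro r
    have hDP : Continuous (fun t => DD w r t - (r:ℂ) * (Real.sin t : ℂ)^2 *
        Complex.exp (-w * (r:ℂ)^2)) := by
      have h : Continuous (fun t : ℝ => DD w r t) := by
        simpa [Function.comp_def] using
          (continuous_DD w).comp ((continuous_const (y := r)).prodMk continuous_id)
      exact h.sub (by fun_prop)
    calc (∫ t in (0:ℝ)..(Real.pi/2), DG w r t)
        = ∫ t in (0:ℝ)..(Real.pi/2),
            ((DD w r t - (r:ℂ) * (Real.sin t : ℂ)^2 * Complex.exp (-w * (r:ℂ)^2))
              + (r:ℂ) * Complex.exp (-w * (r:ℂ)^2)) := by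
          simp_rw [← DG_eq w r]
      _ = (∫ t in (0:ℝ)..(Real.pi/2),
            (DD w r t - (r:ℂ) * (Real.sin t : ℂ)^2 * Complex.exp (-w * (r:ℂ)^2)))
          + ∫ t in (0:ℝ)..(Real.pi/2), ((r:ℂ) * Complex.exp (-w * (r:ℂ)^2)) := by
          apply intervalIntegral.integral_add
          · exact hDP.intervalIntegrable _ _
          · exact intervalIntegrable_const
      _ = (PP w r (Real.pi/2) - PP w r 0)
          + ((Real.pi/2 : ℝ) : ℂ) * ((r:ℂ) * Complex.exp (-w * (r:ℂ)^2)) := by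
          congr 1
          · exact intervalIntegral.integral_eq_sub_of_hasDerivAt
              (fun t _ => hasDerivAt_PP w r t) (hDP.intervalIntegrable _ _)
          · simp [Complex.real_smul]; ring
      _ = ((Real.pi/2 : ℝ) : ℂ) * ((r:ℂ) * Complex.exp (-w * (r:ℂ)^2)) := by
          have h1 : PP w r (Real.pi/2) = 0 := by unfold PP; simp
          have h2 : PP w r 0 = 0 := by unfold PP; simp
          rw [h1, h2]; ring
  -- step 3 : swap
  have swap : (∫ t in (0:ℝ)..(Real.pi/2), ∫ r in (0:ℝ)..R, DG w r t)
      = ∫ r in (0:ℝ)..R, ∫ t in (0:ℝ)..(Real.pi/2), DG w r t := by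
    simp_rw [intervalIntegral.integral_of_le hpi, intervalIntegral.integral_of_le hR]
    apply MeasureTheory.integral_integral_swap
    rw [MeasureTheory.Measure.prod_restrict]
    apply MeasureTheory.IntegrableOn.mono_set
      (((continuous_DG w).comp (continuous_swap)).continuousOn.integrableOn_compact
        (isCompact_Icc.prod isCompact_Icc))
    exact Set.prod_mono Set.Ioc_subset_Icc_self Set.Ioc_subset_Icc_self
  -- assemble
  rw [show (∫ t in (0:ℝ)..(Real.pi/2), gg w R t)
      = ∫ t in (0:ℝ)..(Real.pi/2), ∫ r in (0:ℝ)..R, DG w r t by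
    apply intervalIntegral.integral_congr; intro t _; exact step1 t]
  rw [swap]
  simp_rw [step4]
  rw [← intervalIntegral.integral_const_mul]
  have final : ∀ r ∈ Set.uIcc (0:ℝ) R, HasDerivAt
      (fun r : ℝ => -((Real.pi:ℂ)/4) * Complex.exp (-w * (r:ℂ)^2))
      (w * (((Real.pi/2 : ℝ):ℂ) * ((r:ℂ) * Complex.exp (-w * (r:ℂ)^2)))) r := by
    intro r _
    have hr : HasDerivAt (fun r : ℝ => ((r:ℝ):ℂ)) 1 r := by
      simpa using (hasDerivAt_id r).ofReal_comp
    have hin : HasDerivAt (fun r : ℝ => -w * (r:ℂ)^2) (-w * (2*(r:ℂ))) r := by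
      have h := (hr.mul hr).const_mul (-w)
      have hfun : (fun r : ℝ => -w * (r:ℂ)^2) = fun y : ℝ => -w * ((y:ℂ) * (y:ℂ)) := by
        funext y; ring
      rw [hfun]
      exact h.congr_deriv (by ring)
    have := hin.cexp.const_mul (-((Real.pi:ℂ)/4))
    refine this.congr_deriv ?_
    push_cast
    ring
  have hcont2 : Continuous (fun r : ℝ =>
      w * (((Real.pi/2 : ℝ):ℂ) * ((r:ℂ) * Complex.exp (-w * (r:ℂ)^2)))) := by fun_prop
  rw [intervalIntegral.integral_eq_sub_of_hasDerivAt final (hcont2.intervalIntegrable 0 R)]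
  simp
  ring

set_option maxHeartbeats 1000000 in
lemma mainw (w : ℂ) (θ : ℝ) (hθ : 0 < θ) :
    (∫ t in (0:ℝ)..(Real.pi/2), (2 / (Real.pi : ℂ)) *
      (2 * w * Complex.exp (w * ((θ * Real.sin t ^ 2 : ℝ) : ℂ))
          * ((Real.sqrt (θ * Real.sin t ^ 2) : ℝ) : ℂ) *
        (∫ u in (0:ℝ)..Real.sqrt (θ * Real.sin t ^ 2),
          Complex.exp (-w * (u : ℂ) ^ 2)) + 1))
      = Complex.exp (w * (θ : ℂ)) := by
  have hpi2 : (0:ℝ) ≤ Real.pi/2 := by positivity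
  have hsqθ : ((Real.sqrt θ : ℝ) : ℂ)^2 = (θ:ℂ) := by
    rw [← Complex.ofReal_pow, Real.sq_sqrt hθ.le]
  set Y : ℝ → ℂ := fun t => Complex.exp (w * (θ:ℂ) * (Real.sin t : ℂ)^2) *
    ((Real.sqrt θ * Real.sin t : ℝ) : ℂ) * Ew w (Real.sqrt θ * Real.sin t) with hY
  -- pointwise rewriting of the integrand
  have hpoint : ∀ t ∈ Set.uIcc (0:ℝ) (Real.pi/2),
      (2 / (Real.pi : ℂ)) *
      (2 * w * Complex.exp (w * ((θ * Real.sin t ^ 2 : ℝ) : ℂ))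
          * ((Real.sqrt (θ * Real.sin t ^ 2) : ℝ) : ℂ) *
        (∫ u in (0:ℝ)..Real.sqrt (θ * Real.sin t ^ 2),
          Complex.exp (-w * (u : ℂ) ^ 2)) + 1) = 2/(Real.pi:ℂ) * (2*w*Y t + 1) := by
    intro t ht
    rw [Set.uIcc_of_le hpi2] at ht
    have hs : 0 ≤ Real.sin t :=
      Real.sin_nonneg_of_nonneg_of_le_pi ht.1 (le_trans ht.2 (by linarith [Real.pi_pos]))
    have hsqrt : Real.sqrt (θ * Real.sin t ^ 2) = Real.sqrt θ * Real.sin t := by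
      rw [Real.sqrt_mul hθ.le, Real.sqrt_sq hs]
    have hcast : ((θ * Real.sin t ^ 2 : ℝ) : ℂ) = (θ:ℂ) * (Real.sin t : ℂ)^2 := by
      push_cast; ring
    rw [hY, hsqrt, hcast]
    show _ = 2/(Real.pi:ℂ) * (2*w*(Complex.exp (w * (θ:ℂ) * (Real.sin t : ℂ)^2) *
      ((Real.sqrt θ * Real.sin t : ℝ) : ℂ) * Ew w (Real.sqrt θ * Real.sin t)) + 1)
    rw [show (∫ u in (0:ℝ)..(Real.sqrt θ * Real.sin t),
        Complex.exp (-w * (u:ℂ)^2)) = Ew w (Real.sqrt θ * Real.sin t) from rfl]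
    ring
  rw [intervalIntegral.integral_congr hpoint]
  -- continuity of Y
  have hEc : Continuous (fun t : ℝ => Ew w (Real.sqrt θ * Real.sin t)) := by
    simpa [Function.comp_def] using
      (continuous_Ew w).comp (continuous_const.mul Real.continuous_sin)
  have hYc : Continuous Y := by
    rw [hY]
    exact ((by fun_prop : Continuous (fun t : ℝ =>
      Complex.exp (w * (θ:ℂ) * (Real.sin t : ℂ)^2) *
        ((Real.sqrt θ * Real.sin t : ℝ) : ℂ))).mul hEc)
  -- split the integral
  rw [intervalIntegral.integral_const_mul]
  rw [intervalIntegral.integral_add (f := fun x => 2 * w * Y x)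
    ((continuous_const.mul hYc).intervalIntegrable _ _)
    intervalIntegrable_const]
  rw [intervalIntegral.integral_const_mul, intervalIntegral.integral_const]
  -- reflection t ↦ π/2 - t
  have hrefl : (∫ t in (0:ℝ)..(Real.pi/2), Y t)
      = ∫ t in (0:ℝ)..(Real.pi/2), Y (Real.pi/2 - t) := by
    have := intervalIntegral.integral_comp_sub_left (a := (0:ℝ)) (b := Real.pi/2) Y (Real.pi/2)
    simpa using this.symm
  have hgg : ∀ t : ℝ, Y (Real.pi/2 - t) = Complex.exp (w * (θ:ℂ)) * gg w (Real.sqrt θ) t := by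
    intro t
    rw [hY]
    simp only [Real.sin_pi_div_two_sub]
    rw [gg, hsqθ]
    rw [show w * (θ:ℂ) * (Real.cos t : ℂ)^2
        = w * (θ:ℂ) + (-w * (θ:ℂ) * (Real.sin t : ℂ)^2) from by
      linear_combination (w * (θ:ℂ)) * sin_sq_add_cos_sq_complex t]
    rw [Complex.exp_add]
    ring
  rw [hrefl]
  simp_rw [hgg]
  rw [intervalIntegral.integral_const_mul]
  -- apply the key lemma
  have hkey := keyL w (Real.sqrt θ) (Real.sqrt_nonneg θ)
  rw [hsqθ] at hkey
  have hee : Complex.exp (w * (θ:ℂ)) * Complex.exp (-w * (θ:ℂ)) = 1 := by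
    rw [← Complex.exp_add]
    simp
  have hπ : (Real.pi : ℂ) ≠ 0 := Complex.ofReal_ne_zero.mpr Real.pi_ne_zero
  field_simp
  rw [Complex.real_smul]; push_cast
  linear_combination (4 * Complex.exp (w * (θ:ℂ))) * hkey - (Real.pi:ℂ) * hee

/-- `A(ρ_{ξ,k})(θ) = e^{(ξ+ik)θ}` for every `θ > 0`. -/
theorem stmt14 (ξ : ℝ) (k : ℤ) (θ : ℝ) (hθ : 0 < θ) :
    (∫ t in (0:ℝ)..(Real.pi/2), rho ξ k (θ * Real.sin t ^ 2)) =
      Complex.exp (((ξ : ℂ) + (k : ℂ) * Complex.I) * (θ : ℂ)) := by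
  have := mainw ((ξ : ℂ) + (k : ℂ) * Complex.I) θ hθ
  simpa [rho] using this
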